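/- Let X be a Banach space and 𝔄 a norm-closed, strictly semi-transitive subalgebra of L(X). Then the orbit 𝔄x = {Ax : A ∈ 𝔄} is a closed subspace of X for every x ∈ X. -/

import Mathlib

open Metric Filter Topology Set

set_option linter.unusedSectionVars false

namespace SST11

variable {𝕜 X : Type*} [RCLike 𝕜] [NormedAddCommGroup X] [NormedSpace 𝕜 X] [CompleteSpace X]

variable (𝔄 : NonUnitalSubalgebra 𝕜 (X →L[𝕜] X))

/-- The image of the ball of radius `k` of the algebra at the point `z`. -/
def Im (k : ℝ) (z : X) : Set X :=
  {w | ∃ A : X →L[𝕜] X, A ∈ 𝔄 ∧ ‖A‖ ≤ k ∧ A z = w}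

/-- The orbit of `x`. -/
def orb (x : X) : Set X := {y | ∃ A ∈ 𝔄, A x = y}

/-- The orbit as a submodule. -/
def orbSubmodule (x : X) : Submodule 𝕜 X where
  carrier := orb 𝔄 x
  add_mem' := by
    rintro a b ⟨A, hA, rfl⟩ ⟨B, hB, rfl⟩
    exact ⟨A + B, add_mem hA hB, rfl⟩
  zero_mem' := ⟨0, zero_mem _, by simp⟩
  smul_mem' := by
    rintro c a ⟨A, hA, rfl⟩
    exact ⟨c • A, SMulMemClass.smul_mem c hA, rfl⟩

variable {𝔄}

lemma Im_mono {k k' : ℝ} (h : k ≤ k') (z : X) : Im 𝔄 k z ⊆ Im 𝔄 k' z := by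
  rintro w ⟨A, hA, hn, rfl⟩; exact ⟨A, hA, hn.trans h, rfl⟩

lemma zero_mem_Im {k : ℝ} (hk : 0 ≤ k) (z : X) : (0 : X) ∈ Im 𝔄 k z :=
  ⟨0, zero_mem _, by simpa using hk, by simp⟩

lemma orb_zero (x : X) : (0 : X) ∈ orb 𝔄 x := ⟨0, zero_mem _, by simp⟩

lemma Z_mem_iff {x z : X} :
    z ∈ closure (orb 𝔄 x) ↔ z ∈ (orbSubmodule 𝔄 x).topologicalClosure := by
  rw [← SetLike.mem_coe, Submodule.topologicalClosure_coe]
  rfl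

lemma Z_add {x a b : X} (ha : a ∈ closure (orb 𝔄 x)) (hb : b ∈ closure (orb 𝔄 x)) :
    a + b ∈ closure (orb 𝔄 x) := by
  rw [Z_mem_iff] at *; exact add_mem ha hb

lemma Z_sub {x a b : X} (ha : a ∈ closure (orb 𝔄 x)) (hb : b ∈ closure (orb 𝔄 x)) :
    a - b ∈ closure (orb 𝔄 x) := by
  rw [Z_mem_iff] at *; exact sub_mem ha hb

lemma Z_smul {x a : X} (c : 𝕜) (ha : a ∈ closure (orb 𝔄 x)) :
    c • a ∈ closure (orb 𝔄 x) := by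
  rw [Z_mem_iff] at *; exact Submodule.smul_mem _ c ha

/-- Invariance of the closed orbit under the algebra. -/
lemma Z_inv {x : X} {A : X →L[𝕜] X} (hA : A ∈ 𝔄) {z : X}
    (hz : z ∈ closure (orb 𝔄 x)) : A z ∈ closure (orb 𝔄 x) := by
  have h1 : A '' orb 𝔄 x ⊆ orb 𝔄 x := by
    rintro _ ⟨_, ⟨B, hB, rfl⟩, rfl⟩
    exact ⟨A * B, mul_mem hA hB, by simp [ContinuousLinearMap.mul_apply]⟩
  have h2 := image_closure_subset_closure_image (f := (A : X → X)) A.continuous (s := orb 𝔄 x)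
  exact closure_mono h1 (h2 ⟨z, hz, rfl⟩)

/-- The set of points from which `ζ` is boundedly approximately reachable is closed. -/
lemma isClosed_G (ζ : X) (m : ℝ) (hm : 0 ≤ m) :
    IsClosed {z : X | ζ ∈ closure (Im 𝔄 m z)} := by
  apply isClosed_of_closure_subset
  intro z hz
  show ζ ∈ closure (Im 𝔄 m z)
  rw [Metric.mem_closure_iff]
  intro ε hε
  obtain ⟨z', hz'G, hdz⟩ := Metric.mem_closure_iff.mp hz (ε / (2 * (m + 1))) (by positivity)
  obtain ⟨w, ⟨S, hS, hSn, rfl⟩, hwd⟩ := Metric.mem_closure_iff.mp hz'G (ε / 2) (by positivity)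
  refine ⟨S z, ⟨S, hS, hSn, rfl⟩, ?_⟩
  have h1 : dist (S z') (S z) ≤ m * dist z' z := by
    rw [dist_eq_norm, dist_eq_norm, ← map_sub]
    calc ‖S (z' - z)‖ ≤ ‖S‖ * ‖z' - z‖ := S.le_opNorm _
      _ ≤ m * ‖z' - z‖ := mul_le_mul_of_nonneg_right hSn (norm_nonneg _)
  have h2 : dist z' z < ε / (2 * (m + 1)) := by rwa [dist_comm]
  have h3 : m * dist z' z ≤ m * (ε / (2 * (m + 1))) := by
    apply mul_le_mul_of_nonneg_left h2.le hm
  have h4 : m * (ε / (2 * (m + 1))) < ε / 2 := by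
    have hm1 : (0:ℝ) < m + 1 := by linarith
    have key : m / (m + 1) < 1 := (div_lt_one hm1).mpr (by linarith)
    calc m * (ε / (2 * (m + 1))) = (m / (m + 1)) * (ε / 2) := by rw [div_mul_div_comm]; ring_nf
      _ < 1 * (ε / 2) := mul_lt_mul_of_pos_right key (by positivity)
      _ = ε / 2 := one_mul _
  calc dist ζ (S z) ≤ dist ζ (S z') + dist (S z') (S z) := dist_triangle _ _ _
    _ < ε / 2 + ε / 2 := by
        have := dist_nonneg (x := S z') (y := S z)
        linarith
    _ = ε := by ring

/-- Closure of `Im` is stable under the symmetric-convex combination `(u,v) ↦ u/2 - v/2`. -/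
lemma half_sub_mem_clIm {k : ℝ} {z₀ u v : X}
    (hu : u ∈ closure (Im 𝔄 k z₀)) (hv : v ∈ closure (Im 𝔄 k z₀)) :
    (2⁻¹ : 𝕜) • u - (2⁻¹ : 𝕜) • v ∈ closure (Im 𝔄 k z₀) := by
  have hcont : Continuous (Function.uncurry (fun a b : X => (2⁻¹ : 𝕜) • a - (2⁻¹ : 𝕜) • b)) := by
    fun_prop
  refine map_mem_closure₂ (f := fun a b : X => (2⁻¹ : 𝕜) • a - (2⁻¹ : 𝕜) • b) hcont hu hv ?_
  rintro _ ⟨A, hA, hAn, rfl⟩ _ ⟨B, hB, hBn, rfl⟩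
  refine ⟨(2⁻¹ : 𝕜) • A - (2⁻¹ : 𝕜) • B,
    sub_mem (SMulMemClass.smul_mem _ hA) (SMulMemClass.smul_mem _ hB), ?_, by simp⟩
  have hhalf : ‖(2⁻¹ : 𝕜)‖ = 2⁻¹ := by
    rw [norm_inv]; norm_num
  have hk : 0 ≤ k := le_trans (norm_nonneg A) hAn
  calc ‖(2⁻¹ : 𝕜) • A - (2⁻¹ : 𝕜) • B‖ ≤ ‖(2⁻¹ : 𝕜) • A‖ + ‖(2⁻¹ : 𝕜) • B‖ := norm_sub_le _ _
    _ = 2⁻¹ * ‖A‖ + 2⁻¹ * ‖B‖ := by rw [norm_smul (2⁻¹ : 𝕜) A, norm_smul (2⁻¹ : 𝕜) B, hhalf]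
    _ ≤ 2⁻¹ * k + 2⁻¹ * k := by
        have h1 : 2⁻¹ * ‖A‖ ≤ 2⁻¹ * k := by nlinarith
        have h2 : 2⁻¹ * ‖B‖ ≤ 2⁻¹ * k := by nlinarith
        linarith
    _ = k := by ring

/-- Scaling a point of `closure (Im k z₀)`. -/
lemma smul_mem_clIm (τ : 𝕜) {k : ℝ} {z₀ w : X} (hw : w ∈ closure (Im 𝔄 k z₀)) :
    τ • w ∈ closure (Im 𝔄 (‖τ‖ * k) z₀) := by
  have hcont : Continuous (fun a : X => τ • a) := by fun_prop
  have h1 : (fun a : X => τ • a) '' (Im 𝔄 k z₀) ⊆ Im 𝔄 (‖τ‖ * k) z₀ := by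
    rintro _ ⟨_, ⟨A, hA, hAn, rfl⟩, rfl⟩
    refine ⟨τ • A, SMulMemClass.smul_mem _ hA, ?_, by simp⟩
    rw [norm_smul τ A]
    exact mul_le_mul_of_nonneg_left hAn (norm_nonneg _)
  exact closure_mono h1 (image_closure_subset_closure_image hcont ⟨w, hw, rfl⟩)

/-- Baire category extraction on a closed subset of `X`. -/
lemma baire_ball {Z : Set X} (hZc : IsClosed Z) (hne : Z.Nonempty) {ι : Type} [Countable ι]
    (f : ι → Set X) (hf : ∀ i, IsClosed (f i)) (hcov : Z ⊆ ⋃ i, f i) :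
    ∃ i, ∃ c ∈ Z, ∃ r : ℝ, 0 < r ∧ ∀ v ∈ Z, ‖v - c‖ < r → v ∈ f i := by
  haveI : Nonempty Z := hne.to_subtype
  haveI : CompleteSpace Z := hZc.completeSpace_coe
  have h1 : (⋃ i, ((↑) : Z → X) ⁻¹' f i) = Set.univ := by
    ext z
    simp only [Set.mem_iUnion, Set.mem_preimage, Set.mem_univ, iff_true]
    have := hcov z.2
    simpa using this
  obtain ⟨i, hi⟩ := nonempty_interior_of_iUnion_of_closed
    (fun i => (hf i).preimage continuous_subtype_val) h1
  obtain ⟨⟨c, hcZ⟩, hc⟩ := hi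
  obtain ⟨r, hr, hball⟩ := Metric.isOpen_iff.mp isOpen_interior _ hc
  refine ⟨i, c, hcZ, r, hr, fun v hv hdist => ?_⟩
  have hmem : (⟨v, hv⟩ : Z) ∈ Metric.ball (⟨c, hcZ⟩ : Z) r := by
    simp only [Metric.mem_ball, Subtype.dist_eq, dist_eq_norm]
    exact hdist
  have hv2 : (⟨v, hv⟩ : Z) ∈ ((↑) : Z → X) ⁻¹' f i := interior_subset (hball hmem)
  exact hv2

lemma norm_two_k : ‖(2:𝕜)‖ = 2 := by simp

/-- From approximate bounded reachability of all small vectors of `Z` from `z₀`,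
 get exact reachability with controlled norm. -/
lemma exact_small (hclosed : IsClosed (𝔄 : Set (X →L[𝕜] X))) {x z₀ : X}
    (hz₀ : z₀ ∈ closure (orb 𝔄 x)) {k r : ℝ} (hk : 0 ≤ k) (hr : 0 < r)
    (S1 : ∀ h ∈ closure (orb 𝔄 x), ‖h‖ < r → h ∈ closure (Im 𝔄 k z₀)) :
    ∀ v ∈ closure (orb 𝔄 x), ‖v‖ < r →
      ∃ A : X →L[𝕜] X, A ∈ 𝔄 ∧ ‖A‖ ≤ 2 * k ∧ A z₀ = v := by
  have h2ne : ∀ n : ℕ, ((2 : 𝕜) ^ n) ≠ 0 := fun n => pow_ne_zero n two_ne_zero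
  have S2 : ∀ (n : ℕ), ∀ h ∈ closure (orb 𝔄 x), ‖h‖ < r / 2 ^ n →
      h ∈ closure (Im 𝔄 (k / 2 ^ n) z₀) := by
    intro n h hh hn
    have h2 : ((2 : 𝕜) ^ n) • h ∈ closure (orb 𝔄 x) := Z_smul _ hh
    have hn2 : ‖((2 : 𝕜) ^ n) • h‖ < r := by
      rw [norm_smul ((2:𝕜)^n) h, norm_pow, norm_two_k]
      calc (2:ℝ) ^ n * ‖h‖ < 2 ^ n * (r / 2 ^ n) :=
            mul_lt_mul_of_pos_left hn (by positivity)
        _ = r := by field_simp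
    have h3 := smul_mem_clIm ((2 : 𝕜) ^ n)⁻¹ (S1 _ h2 hn2)
    have e1 : ((2 : 𝕜) ^ n)⁻¹ • ((2 : 𝕜) ^ n) • h = h := by
      rw [smul_smul, inv_mul_cancel₀ (h2ne n), one_smul]
    have e2 : ‖((2 : 𝕜) ^ n)⁻¹‖ * k = k / 2 ^ n := by
      rw [norm_inv, norm_pow, norm_two_k, div_eq_mul_inv, mul_comm]
    rwa [e1, e2] at h3
  have step : ∀ (n : ℕ) (u : X), u ∈ closure (orb 𝔄 x) → ‖u‖ < r / 2 ^ n →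
      ∃ B : X →L[𝕜] X, B ∈ 𝔄 ∧ ‖B‖ ≤ k / 2 ^ n ∧ (u - B z₀) ∈ closure (orb 𝔄 x) ∧
        ‖u - B z₀‖ < r / 2 ^ (n + 1) := by
    intro n u hu hun
    obtain ⟨w, ⟨B, hB, hBn, rfl⟩, hwd⟩ :=
      Metric.mem_closure_iff.mp (S2 n u hu hun) (r / 2 ^ (n+1)) (by positivity)
    exact ⟨B, hB, hBn, Z_sub hu (Z_inv hB hz₀), by rwa [← dist_eq_norm]⟩
  intro v hv hvr
  choose! Bf hB1 hB2 hB3 hB4 using step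
  set u : ℕ → X := fun n => Nat.rec (motive := fun _ => X) v (fun n un => un - Bf n un z₀) n
    with hu_def
  have hu0 : u 0 = v := rfl
  have hus : ∀ n, u (n+1) = u n - Bf n (u n) z₀ := fun n => rfl
  have hinv : ∀ n, u n ∈ closure (orb 𝔄 x) ∧ ‖u n‖ < r / 2 ^ n := by
    intro n; induction n with
    | zero => exact ⟨hv, by simpa [hu0] using hvr⟩
    | succ n ih =>
      rw [hus n]
      exact ⟨hB3 n (u n) ih.1 ih.2, hB4 n (u n) ih.1 ih.2⟩
  set B : ℕ → X →L[𝕜] X := fun n => Bf n (u n) with hB_def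
  have hBmem : ∀ n, B n ∈ 𝔄 := fun n => hB1 n (u n) (hinv n).1 (hinv n).2
  have hBnorm : ∀ n, ‖B n‖ ≤ k / 2 ^ n := fun n => hB2 n (u n) (hinv n).1 (hinv n).2
  have hgeo : Summable (fun n : ℕ => k / 2 ^ n) := by
    have h := (summable_geometric_of_lt_one (by norm_num : (0:ℝ) ≤ 2⁻¹) (by norm_num)).mul_left k
    apply h.congr
    intro n
    rw [inv_pow, ← div_eq_mul_inv]
  have hsum : Summable B := Summable.of_norm_bounded hgeo hBnorm
  set A := ∑' n, B n with hA_def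
  have hps : ∀ n, (∑ i ∈ Finset.range n, B i) z₀ = v - u n := by
    intro n; induction n with
    | zero => simp [hu0]
    | succ n ih =>
      rw [Finset.sum_range_succ, ContinuousLinearMap.add_apply, ih, hus n]
      abel
  have hAmem : A ∈ 𝔄 := by
    refine hclosed.mem_of_tendsto hsum.hasSum.tendsto_sum_nat ?_
    exact Filter.Eventually.of_forall (fun n => sum_mem (fun i _ => hBmem i))
  have hnormsum : Summable (fun n => ‖B n‖) :=
    Summable.of_nonneg_of_le (fun n => norm_nonneg _) hBnorm hgeo
  have hAnorm : ‖A‖ ≤ 2 * k := by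
    have h1 : ‖A‖ ≤ ∑' n, ‖B n‖ := norm_tsum_le_tsum_norm hnormsum
    have h2 : (∑' n, ‖B n‖) ≤ ∑' n : ℕ, k / 2 ^ n := Summable.tsum_le_tsum hBnorm hnormsum hgeo
    have h3 : (∑' n : ℕ, k / 2 ^ n) = 2 * k := by
      have e : ∀ n : ℕ, k / 2 ^ n = k * (1/2 : ℝ) ^ n := by
        intro n; rw [one_div, inv_pow, ← div_eq_mul_inv]
      rw [tsum_congr e, tsum_mul_left, tsum_geometric_two]
      ring
    linarith
  have hAz : A z₀ = v := by
    have hev : Tendsto (fun S : X →L[𝕜] X => S z₀) (𝓝 A) (𝓝 (A z₀)) :=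
      ((ContinuousLinearMap.apply 𝕜 X z₀).continuous).tendsto A
    have h1 : Tendsto (fun n => (∑ i ∈ Finset.range n, B i) z₀) atTop (𝓝 (A z₀)) :=
      hev.comp hsum.hasSum.tendsto_sum_nat
    have h1' : Tendsto (fun n => v - u n) atTop (𝓝 (A z₀)) := h1.congr hps
    have hu_to : Tendsto u atTop (𝓝 0) := by
      apply squeeze_zero_norm (fun n => (hinv n).2.le)
      have h := (tendsto_pow_atTop_nhds_zero_of_lt_one
        (by norm_num : (0:ℝ) ≤ 1/2) (by norm_num : (1/2:ℝ) < 1)).const_mul r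
      simp only [mul_zero] at h
      apply h.congr
      intro n
      rw [one_div, inv_pow, ← div_eq_mul_inv]
    have h2 : Tendsto (fun n => v - u n) atTop (𝓝 v) := by
      have := tendsto_const_nhds (α := ℕ) (f := atTop) (x := v) |>.sub hu_to
      simpa using this
    exact tendsto_nhds_unique h1' h2
  exact ⟨A, hAmem, hAnorm, hAz⟩

/-- Quantitative solvability at `z₀` from the ball condition. -/
lemma global_solve (hclosed : IsClosed (𝔄 : Set (X →L[𝕜] X))) {x z₀ : X}
    (hz₀ : z₀ ∈ closure (orb 𝔄 x)) {k r : ℝ} {c : X} (hk : 0 ≤ k) (hr : 0 < r)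
    (hc : c ∈ closure (orb 𝔄 x))
    (H : ∀ v ∈ closure (orb 𝔄 x), ‖v - c‖ < r → v ∈ closure (Im 𝔄 k z₀)) :
    ∃ κ : ℝ, 0 < κ ∧ ∀ v ∈ closure (orb 𝔄 x),
      ∃ A : X →L[𝕜] X, A ∈ 𝔄 ∧ ‖A‖ ≤ κ * ‖v‖ ∧ A z₀ = v := by
  -- recenter at the origin
  have S1 : ∀ h ∈ closure (orb 𝔄 x), ‖h‖ < r → h ∈ closure (Im 𝔄 k z₀) := by
    intro h hh hn
    have h1 : c + h ∈ closure (orb 𝔄 x) := Z_add hc hh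
    have h2 : c - h ∈ closure (orb 𝔄 x) := Z_sub hc hh
    have e1 : c + h ∈ closure (Im 𝔄 k z₀) := H _ h1 (by simpa using hn)
    have e2 : c - h ∈ closure (Im 𝔄 k z₀) := H _ h2 (by simpa [norm_sub_rev] using hn)
    have h3 := half_sub_mem_clIm e1 e2
    have e3 : (2⁻¹ : 𝕜) • (c + h) - (2⁻¹ : 𝕜) • (c - h) = h := by
      module
    rwa [e3] at h3
  have hsolve := exact_small hclosed hz₀ hk hr S1
  refine ⟨(2 * k + 1) * (2 / r) + 1, by positivity, ?_⟩
  intro v hv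
  rcases eq_or_ne v 0 with rfl | hv0
  · exact ⟨0, zero_mem _, by simp, by simp⟩
  · have hvn : (0:ℝ) < ‖v‖ := norm_pos_iff.mpr hv0
    set t : ℝ := r / (2 * ‖v‖) with ht_def
    have ht : 0 < t := by positivity
    have h1 : ((t : ℝ) : 𝕜) • v ∈ closure (orb 𝔄 x) := Z_smul _ hv
    have h2 : ‖((t : ℝ) : 𝕜) • v‖ < r := by
      rw [norm_smul, RCLike.norm_ofReal, abs_of_pos ht]
      rw [ht_def]
      rw [div_mul_eq_mul_div]
      rw [div_lt_iff₀ (by positivity)]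
      nlinarith
    obtain ⟨A', hA', hA'n, hA'z⟩ := hsolve _ h1 h2
    refine ⟨((t⁻¹ : ℝ) : 𝕜) • A', SMulMemClass.smul_mem _ hA', ?_, ?_⟩
    · rw [norm_smul ((t⁻¹ : ℝ) : 𝕜) A', RCLike.norm_ofReal, abs_of_pos (by positivity : (0:ℝ) < t⁻¹)]
      have : t⁻¹ = 2 * ‖v‖ / r := by
        rw [ht_def]; field_simp
      rw [this]
      calc 2 * ‖v‖ / r * ‖A'‖ ≤ 2 * ‖v‖ / r * (2 * k) := by
            apply mul_le_mul_of_nonneg_left hA'n (by positivity)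
        _ ≤ ((2 * k + 1) * (2 / r) + 1) * ‖v‖ := by
            rw [div_mul_eq_mul_div, mul_comm]
            rw [div_le_iff₀ (by positivity)]
            have e : (2:ℝ) / r * r = 2 := div_mul_cancel₀ _ (ne_of_gt hr)
            nlinarith [e, hvn.le, hk, hr.le, mul_nonneg hk hvn.le]
    · rw [ContinuousLinearMap.smul_apply, hA'z, smul_smul]
      rw [← RCLike.ofReal_mul, inv_mul_cancel₀ (ne_of_gt ht)]
      simp

/-- If some `z₀ ∈ Z` admits norm-controlled exact solvability, the orbit is all of `Z`. -/
lemma win (hclosed : IsClosed (𝔄 : Set (X →L[𝕜] X))) {x z₀ : X}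
    (hz₀ : z₀ ∈ closure (orb 𝔄 x)) {κ : ℝ} (hκ : 0 < κ)
    (hsol : ∀ v ∈ closure (orb 𝔄 x), ∃ A : X →L[𝕜] X, A ∈ 𝔄 ∧ ‖A‖ ≤ κ * ‖v‖ ∧ A z₀ = v) :
    closure (orb 𝔄 x) ⊆ orb 𝔄 x := by
  obtain ⟨w, hw, hwd⟩ := Metric.mem_closure_iff.mp hz₀ (1 / (2 * κ)) (by positivity)
  set q := κ * ‖z₀ - w‖ with hq_def
  have hq0 : 0 ≤ q := by positivity
  have hq1 : q < 1/2 := by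
    have hlt : ‖z₀ - w‖ < 1/(2*κ) := by rwa [← dist_eq_norm]
    calc q = κ * ‖z₀ - w‖ := rfl
      _ < κ * (1/(2*κ)) := mul_lt_mul_of_pos_left hlt hκ
      _ = 1/2 := by field_simp
  have hq2 : q < 1 := by linarith
  have hwZ : w ∈ closure (orb 𝔄 x) := subset_closure hw
  have hsolw : ∀ v ∈ closure (orb 𝔄 x), ∃ A : X →L[𝕜] X, A ∈ 𝔄 ∧ A w = v := by
    intro v hv
    choose! sol hs1 hs2 hs3 using hsol
    set e : ℕ → X := fun n => Nat.rec (motive := fun _ => X) v (fun _ en => en - (sol en) w) n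
      with he_def
    have he0 : e 0 = v := rfl
    have hes : ∀ n, e (n+1) = e n - (sol (e n)) w := fun n => rfl
    have hinv : ∀ n, e n ∈ closure (orb 𝔄 x) ∧ ‖e n‖ ≤ q ^ n * ‖v‖ := by
      intro n; induction n with
      | zero => exact ⟨hv, by rw [he0]; simp⟩
      | succ n ih =>
        have h1 := hs1 (e n) ih.1
        have h3 := hs3 (e n) ih.1
        refine ⟨by rw [hes n]; exact Z_sub ih.1 (Z_inv h1 hwZ), ?_⟩
        have hee : e (n+1) = (sol (e n)) (z₀ - w) := by
          rw [hes n, map_sub, h3]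
        rw [hee]
        calc ‖(sol (e n)) (z₀ - w)‖ ≤ ‖sol (e n)‖ * ‖z₀ - w‖ :=
              (sol (e n)).le_opNorm _
          _ ≤ (κ * ‖e n‖) * ‖z₀ - w‖ :=
              mul_le_mul_of_nonneg_right (hs2 (e n) ih.1) (norm_nonneg _)
          _ = q * ‖e n‖ := by rw [hq_def]; ring
          _ ≤ q * (q ^ n * ‖v‖) := mul_le_mul_of_nonneg_left ih.2 hq0
          _ = q ^ (n+1) * ‖v‖ := by ring
    set B : ℕ → X →L[𝕜] X := fun n => sol (e n) with hB_def
    have hBmem : ∀ n, B n ∈ 𝔄 := fun n => hs1 (e n) (hinv n).1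
    have hBnorm : ∀ n, ‖B n‖ ≤ κ * ‖v‖ * q ^ n := by
      intro n
      calc ‖B n‖ ≤ κ * ‖e n‖ := hs2 (e n) (hinv n).1
        _ ≤ κ * (q ^ n * ‖v‖) := mul_le_mul_of_nonneg_left (hinv n).2 hκ.le
        _ = κ * ‖v‖ * q ^ n := by ring
    have hgeo : Summable (fun n : ℕ => κ * ‖v‖ * q ^ n) :=
      (summable_geometric_of_lt_one hq0 hq2).mul_left _
    have hsum : Summable B := Summable.of_norm_bounded hgeo hBnorm
    set A := ∑' n, B n with hA_def
    have hAmem : A ∈ 𝔄 := by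
      refine hclosed.mem_of_tendsto hsum.hasSum.tendsto_sum_nat ?_
      exact Filter.Eventually.of_forall (fun n => sum_mem (fun i _ => hBmem i))
    have hps : ∀ n, (∑ i ∈ Finset.range n, B i) w = v - e n := by
      intro n; induction n with
      | zero => simp [he0]
      | succ n ih =>
        rw [Finset.sum_range_succ, ContinuousLinearMap.add_apply, ih, hes n]
        abel
    have hAw : A w = v := by
      have hev : Tendsto (fun S : X →L[𝕜] X => S w) (𝓝 A) (𝓝 (A w)) :=
        ((ContinuousLinearMap.apply 𝕜 X w).continuous).tendsto A
      have h1 : Tendsto (fun n => (∑ i ∈ Finset.range n, B i) w) atTop (𝓝 (A w)) :=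
        hev.comp hsum.hasSum.tendsto_sum_nat
      have h1' : Tendsto (fun n => v - e n) atTop (𝓝 (A w)) := h1.congr hps
      have he_to : Tendsto e atTop (𝓝 0) := by
        apply squeeze_zero_norm (fun n => (hinv n).2)
        have h := (tendsto_pow_atTop_nhds_zero_of_lt_one hq0 hq2).mul_const (‖v‖)
        simpa using h
      have h2 : Tendsto (fun n => v - e n) atTop (𝓝 v) := by
        have := tendsto_const_nhds (α := ℕ) (f := atTop) (x := v) |>.sub he_to
        simpa using this
      exact tendsto_nhds_unique h1' h2
    exact ⟨A, hAmem, hAw⟩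
  obtain ⟨Bw, hBw, rfl⟩ := hw
  intro v hv
  obtain ⟨A, hA, hAv⟩ := hsolw v hv
  exact ⟨A * Bw, mul_mem hA hBw, by rw [ContinuousLinearMap.mul_apply]; exact hAv⟩

/-- The ball condition at some `z₀ ∈ Z` implies that the orbit is closed. -/
lemma ML1 (hclosed : IsClosed (𝔄 : Set (X →L[𝕜] X))) {x z₀ : X}
    (hz₀ : z₀ ∈ closure (orb 𝔄 x)) {k r : ℝ} {c : X} (hk : 0 ≤ k) (hr : 0 < r)
    (hc : c ∈ closure (orb 𝔄 x))
    (H : ∀ v ∈ closure (orb 𝔄 x), ‖v - c‖ < r → v ∈ closure (Im 𝔄 k z₀)) :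
    closure (orb 𝔄 x) ⊆ orb 𝔄 x := by
  obtain ⟨κ, hκ, hsol⟩ := global_solve hclosed hz₀ hk hr hc H
  exact win hclosed hz₀ hκ hsol

lemma Im_comp {m : ℝ} {B : X →L[𝕜] X} (hB : B ∈ 𝔄) (x : X) :
    Im 𝔄 m (B x) ⊆ Im 𝔄 (m * (‖B‖ + 1)) x := by
  rintro _ ⟨S, hS, hSn, rfl⟩
  have hm : 0 ≤ m := le_trans (norm_nonneg S) hSn
  refine ⟨S * B, mul_mem hS hB, ?_, by rw [ContinuousLinearMap.mul_apply]⟩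
  calc ‖S * B‖ ≤ ‖S‖ * ‖B‖ := norm_mul_le _ _
    _ ≤ m * (‖B‖ + 1) := by nlinarith [norm_nonneg B]

/-- Main lemma: the orbit of any point is closed. -/
lemma main (hclosed : IsClosed (𝔄 : Set (X →L[𝕜] X)))
    (hsst : ∀ x y : X, x ≠ 0 → y ≠ 0 → ∃ A ∈ 𝔄, A x = y ∨ A y = x) (x : X) :
    IsClosed {y : X | ∃ A ∈ 𝔄, A x = y} := by
  rcases eq_or_ne x 0 with rfl | hx
  · have he : {y : X | ∃ A ∈ 𝔄, A (0:X) = y} = {0} := by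
      ext y
      constructor
      · rintro ⟨A, hA, rfl⟩; simp
      · intro hy
        rw [Set.mem_singleton_iff] at hy
        exact ⟨0, zero_mem _, by simp [hy]⟩
    rw [show {y : X | ∃ A ∈ 𝔄, A (0:X) = y} = {0} from he]
    exact isClosed_singleton
  · show IsClosed (orb 𝔄 x)
    have hxO : x ∈ orb 𝔄 x := by
      obtain ⟨A, hA, hc⟩ := hsst x x hx hx
      rcases hc with h | h <;> exact ⟨A, hA, h⟩
    have hxZ : x ∈ closure (orb 𝔄 x) := subset_closure hxO
    have hZne : (closure (orb 𝔄 x)).Nonempty := ⟨x, hxZ⟩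
    refine isClosed_of_closure_subset ?_
    by_cases hBC : ∃ z₀ ∈ closure (orb 𝔄 x), ∃ (k r : ℝ) (c : X), 0 ≤ k ∧ 0 < r ∧
        c ∈ closure (orb 𝔄 x) ∧
        ∀ v ∈ closure (orb 𝔄 x), ‖v - c‖ < r → v ∈ closure (Im 𝔄 k z₀)
    · obtain ⟨z₀, hz₀, k, r, c, hk, hr, hc, H⟩ := hBC
      exact ML1 hclosed hz₀ hk hr hc H
    · exfalso
      have hGcov : closure (orb 𝔄 x) ⊆ ⋃ (n : ℕ), closure (Im 𝔄 (n:ℝ) x) := by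
        intro ζ hζ
        rcases eq_or_ne ζ 0 with rfl | hζ0
        · exact Set.mem_iUnion.mpr ⟨0, subset_closure (zero_mem_Im (by norm_num) x)⟩
        · have hcov : closure (orb 𝔄 x) ⊆ ⋃ i : ℕ ⊕ ℕ,
              (Sum.elim (fun n : ℕ => closure (Im 𝔄 (n:ℝ) ζ))
                (fun m : ℕ => {z : X | ζ ∈ closure (Im 𝔄 (m:ℝ) z)}) i) := by
            intro z hz
            rcases eq_or_ne z 0 with rfl | hz0
            · exact Set.mem_iUnion.mpr ⟨Sum.inl 0, subset_closure (zero_mem_Im (by norm_num) ζ)⟩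
            · obtain ⟨A, hA, hcase⟩ := hsst ζ z hζ0 hz0
              rcases hcase with h | h
              · exact Set.mem_iUnion.mpr
                  ⟨Sum.inl ⌈‖A‖⌉₊, subset_closure ⟨A, hA, Nat.le_ceil _, h⟩⟩
              · exact Set.mem_iUnion.mpr
                  ⟨Sum.inr ⌈‖A‖⌉₊, subset_closure ⟨A, hA, Nat.le_ceil _, h⟩⟩
          have hfcl : ∀ i : ℕ ⊕ ℕ, IsClosed
              (Sum.elim (fun n : ℕ => closure (Im 𝔄 (n:ℝ) ζ))
                (fun m : ℕ => {z : X | ζ ∈ closure (Im 𝔄 (m:ℝ) z)}) i) := by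
            rintro (n | m)
            · exact isClosed_closure
            · exact isClosed_G ζ (m:ℝ) (Nat.cast_nonneg m)
          obtain ⟨i, c, hcZ, r, hr, hball⟩ := baire_ball isClosed_closure hZne _ hfcl hcov
          rcases i with n | m
          · exact absurd ⟨ζ, hζ, (n:ℝ), r, c, Nat.cast_nonneg n, hr, hcZ, hball⟩ hBC
          · obtain ⟨w, hwO, hwd⟩ := Metric.mem_closure_iff.mp hcZ r hr
            have h1 : ζ ∈ closure (Im 𝔄 (m:ℝ) w) := by
              refine hball w (subset_closure hwO) ?_
              rw [← dist_eq_norm, dist_comm]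
              exact hwd
            obtain ⟨B, hB, rfl⟩ := hwO
            have h2 : ζ ∈ closure (Im 𝔄 ((m:ℝ) * (‖B‖+1)) x) :=
              closure_mono (Im_comp hB x) h1
            exact Set.mem_iUnion.mpr ⟨⌈(m:ℝ) * (‖B‖+1)⌉₊,
              closure_mono (Im_mono (Nat.le_ceil _) x) h2⟩
      obtain ⟨n, c, hcZ, r, hr, hball⟩ := baire_ball isClosed_closure hZne
        (fun n : ℕ => closure (Im 𝔄 (n:ℝ) x)) (fun n => isClosed_closure) hGcov
      exact hBC ⟨x, hxZ, (n:ℝ), r, c, Nat.cast_nonneg n, hr, hcZ, hball⟩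

end SST11

/-- Let `X` be a Banach space and `𝔄` a norm-closed, strictly semi-transitive subalgebra
of `L(X)`.  Then the orbit `𝔄x = {A x : A ∈ 𝔄}` is closed for every `x ∈ X`. -/
theorem stmt_11 {𝕜 X : Type*} [RCLike 𝕜]
    [NormedAddCommGroup X] [NormedSpace 𝕜 X] [CompleteSpace X]
    (𝔄 : NonUnitalSubalgebra 𝕜 (X →L[𝕜] X))
    (hclosed : IsClosed (𝔄 : Set (X →L[𝕜] X)))
    (hsst : ∀ x y : X, x ≠ 0 → y ≠ 0 → ∃ A ∈ 𝔄, A x = y ∨ A y = x)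
    (x : X) :
    IsClosed {y : X | ∃ A ∈ 𝔄, A x = y} := by
  exact SST11.main hclosed hsst x
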